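/- arXiv:2103.03410 — 2 statements merged into one kernel-verified Lean document; each statement's English description precedes it below -/
import Mathlib

section
/- Let α ∈ (0,1), T ∈ (0,∞), and let u, η ∈ C^1([0,T]) with u(0) = 0 and η(T) = 0. Then ∫_0^T u'(t) η(t) dt = − ∫_0^T ∂_t^α u(t) · J_T^α η'(t) dt, where ∂_t^α u(t) = (1/Γ(1−α)) ∫_0^t (t−s)^{−α} u'(s) ds is the Caputo derivative of u and J_T^α v(t) = (1/Γ(α)) ∫_t^T (s−t)^{α−1} v(s) ds. -/
open MeasureTheory Set

noncomputable section

/-- The Caputo fractional derivative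
`∂_t^α u(t) = (1/Γ(1−α)) ∫_0^t (t−s)^{−α} u'(s) ds`. -/
def caputo1 (α : ℝ) (u : ℝ → ℝ) (t : ℝ) : ℝ :=
  (1 / Real.Gamma (1 - α)) * ∫ s in Ioo (0:ℝ) t, (t - s) ^ (-α) * deriv u s

/-- The right-sided Riemann–Liouville fractional integral
`J_T^α v(t) = (1/Γ(α)) ∫_t^T (s−t)^{α−1} v(s) ds`. -/
def rightInt (α T : ℝ) (v : ℝ → ℝ) (t : ℝ) : ℝ :=
  (1 / Real.Gamma α) * ∫ s in Ioo t T, (s - t) ^ (α - 1) * v s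

end

namespace Statement8Aux

open intervalIntegral

lemma real_beta {a b : ℝ} (ha : 0 < a) (hb : 0 < b) :
    ∫ x in (0:ℝ)..1, x ^ (a - 1) * (1 - x) ^ (b - 1) =
      Real.Gamma a * Real.Gamma b / Real.Gamma (a + b) := by
  have hG := Complex.Gamma_mul_Gamma_eq_betaIntegral (s := a) (t := b) (by simpa) (by simpa)
  have hcast : (Complex.betaIntegral a b) =
      ((∫ x in (0:ℝ)..1, x ^ (a - 1) * (1 - x) ^ (b - 1) : ℝ) : ℂ) := by
    rw [Complex.betaIntegral, ← intervalIntegral.integral_ofReal]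
    refine intervalIntegral.integral_congr fun x hx => ?_
    rw [uIcc_of_le zero_le_one] at hx
    rw [show ((a:ℂ) - 1) = ((a - 1 : ℝ) : ℂ) by push_cast; ring,
        show ((b:ℂ) - 1) = ((b - 1 : ℝ) : ℂ) by push_cast; ring,
        show (1 - (x:ℂ)) = ((1 - x : ℝ) : ℂ) by push_cast; ring,
        ← Complex.ofReal_cpow hx.1, ← Complex.ofReal_cpow (by linarith [hx.2])]
    push_cast
    ring
  rw [hcast, ← Complex.ofReal_add, Complex.Gamma_ofReal, Complex.Gamma_ofReal,
    Complex.Gamma_ofReal] at hG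
  have hpos : (0:ℝ) < Real.Gamma (a + b) := Real.Gamma_pos_of_pos (by linarith)
  norm_cast at hG
  field_simp
  linarith [hG]

lemma kernel_beta {α : ℝ} (hα : α ∈ Ioo (0:ℝ) 1) {s r : ℝ} (hsr : s < r) :
    ∫ t in Ioo s r, (t - s) ^ (-α) * (r - t) ^ (α - 1) =
      Real.Gamma (1 - α) * Real.Gamma α := by
  obtain ⟨hα0, hα1⟩ := hα
  have hd : 0 < r - s := by linarith
  rw [← MeasureTheory.integral_Ioc_eq_integral_Ioo,
    ← intervalIntegral.integral_of_le hsr.le]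
  have h1 : ∫ t in s..r, (t - s) ^ (-α) * (r - t) ^ (α - 1)
      = ∫ x in (0:ℝ)..(r - s), x ^ (-α) * (r - s - x) ^ (α - 1) := by
    have := intervalIntegral.integral_comp_add_left (a := (0:ℝ)) (b := r - s)
      (fun t => (t - s) ^ (-α) * (r - t) ^ (α - 1)) s
    simp only [add_zero, add_sub_cancel] at this
    rw [← this]
    refine intervalIntegral.integral_congr fun x hx => ?_
    ring_nf
  have h2 : ∫ x in (0:ℝ)..(r - s), x ^ (-α) * (r - s - x) ^ (α - 1)
      = (r - s) • ∫ y in (0:ℝ)..1, ((r - s) * y) ^ (-α) * (r - s - (r - s) * y) ^ (α - 1) := by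
    rw [intervalIntegral.integral_comp_mul_left
      (fun x => x ^ (-α) * (r - s - x) ^ (α - 1)) hd.ne', mul_zero, mul_one, smul_smul,
      mul_inv_cancel₀ hd.ne', one_smul]
  have h3 : ∫ y in (0:ℝ)..1, ((r - s) * y) ^ (-α) * (r - s - (r - s) * y) ^ (α - 1)
      = (r - s)⁻¹ * ∫ y in (0:ℝ)..1, y ^ ((1 - α) - 1) * (1 - y) ^ (α - 1) := by
    rw [← intervalIntegral.integral_const_mul]
    refine intervalIntegral.integral_congr fun y hy => ?_
    rw [uIcc_of_le zero_le_one] at hy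
    rw [show r - s - (r - s) * y = (r - s) * (1 - y) by ring,
      Real.mul_rpow hd.le hy.1, Real.mul_rpow hd.le (by linarith [hy.2])]
    rw [show (1:ℝ) - α - 1 = -α by ring]
    rw [show ((r-s):ℝ) ^ (-α) * y ^ (-α) * ((r-s) ^ (α-1) * (1-y) ^ (α-1))
        = ((r-s) ^ (-α) * (r-s) ^ (α-1)) * (y ^ (-α) * (1-y) ^ (α-1)) by ring]
    rw [← Real.rpow_add hd, show -α + (α - 1) = (-1 : ℝ) by ring, Real.rpow_neg_one]
  rw [h1, h2, h3, real_beta (by linarith) hα0, smul_eq_mul,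
    show (1:ℝ) - α + α = 1 by ring, Real.Gamma_one, div_one, ← mul_assoc,
    mul_inv_cancel₀ hd.ne', one_mul]

lemma rpow_ion {β : ℝ} (hβ : -1 < β) (c d : ℝ) :
    IntegrableOn (fun y => (y - c) ^ β) (Ioo c d) := by
  rcases le_or_gt c d with h | h
  · have h1 : IntervalIntegrable (fun x : ℝ => x ^ β) volume 0 (d - c) :=
      intervalIntegral.intervalIntegrable_rpow' hβ
    have h2 := h1.comp_sub_right c
    simp only [zero_add, sub_add_cancel] at h2
    have h3 := (intervalIntegrable_iff_integrableOn_Ioc_of_le (by linarith)).mp h2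
    exact h3.mono_set Ioo_subset_Ioc_self
  · simp [Ioo_eq_empty_of_le h.le, IntegrableOn]

lemma rpow_val {β : ℝ} (hβ : -1 < β) {c d : ℝ} (h : c ≤ d) :
    ∫ y in Ioo c d, (y - c) ^ β = (d - c) ^ (β + 1) / (β + 1) := by
  rw [← MeasureTheory.integral_Ioc_eq_integral_Ioo, ← intervalIntegral.integral_of_le h]
  have h1 := intervalIntegral.integral_comp_sub_right (a := c) (b := d) (fun x : ℝ => x ^ β) c
  rw [h1, sub_self, integral_rpow (Or.inl hβ),
    Real.zero_rpow (by linarith), sub_zero]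

lemma prod_int {β a b M : ℝ} (hβ : -1 < β) (hab : a < b) (hM : 0 ≤ M) (v w : ℝ → ℝ)
    (hv : Measurable v) (hvi : IntegrableOn v (Ioo a b))
    (hw : Measurable w) (hMw : ∀ y ∈ Ioo a b, |w y| ≤ M) :
    Integrable (fun p : ℝ × ℝ => if p.1 < p.2 then v p.1 * (p.2 - p.1) ^ β * w p.2 else 0)
      ((volume.restrict (Ioo a b)).prod (volume.restrict (Ioo a b))) := by
  have hβ1 : (0:ℝ) < β + 1 := by linarith
  have hFm : Measurable (fun p : ℝ × ℝ =>
      if p.1 < p.2 then v p.1 * (p.2 - p.1) ^ β * w p.2 else 0) := by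
    refine Measurable.ite (measurableSet_lt measurable_fst measurable_snd) ?_ measurable_const
    have h1 : Measurable (fun p : ℝ × ℝ => (p.2 - p.1) ^ β) := by fun_prop
    exact ((hv.comp measurable_fst).mul h1).mul (hw.comp measurable_snd)
  have hsec : ∀ x ∈ Ioo a b, Integrable
      (fun y => if x < y then v x * (y - x) ^ β * w y else 0)
      (volume.restrict (Ioo a b)) := by
    intro x hx
    have hgi : Integrable (fun y => (|v x| * M) * (Ioo x b).indicator
        (fun y => (y - x) ^ β) y) (volume.restrict (Ioo a b)) :=
      (((rpow_ion hβ x b).integrable_indicator measurableSet_Ioo).restrict).const_mul _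
    refine Integrable.mono' hgi ?_ ?_
    · have h1 : Measurable (fun y : ℝ => (y - x) ^ β) := by fun_prop
      exact (Measurable.ite (measurableSet_lt measurable_const measurable_id)
        ((measurable_const.mul h1).mul hw) measurable_const).aestronglyMeasurable
    · filter_upwards [ae_restrict_mem measurableSet_Ioo] with y hy
      by_cases hxy : x < y
      · have hynn : (0:ℝ) ≤ (y - x) ^ β := Real.rpow_nonneg (by linarith) _
        simp only [hxy, if_true]
        rw [indicator_of_mem (mem_Ioo.mpr ⟨hxy, hy.2⟩), Real.norm_eq_abs, abs_mul, abs_mul,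
          abs_of_nonneg hynn]
        calc |v x| * (y - x) ^ β * |w y| ≤ |v x| * (y - x) ^ β * M :=
              mul_le_mul_of_nonneg_left (hMw y hy) (by positivity)
          _ = |v x| * M * (y - x) ^ β := by ring
      · simp only [hxy, if_false, norm_zero]
        exact mul_nonneg (by positivity)
          (indicator_nonneg (fun z hz => Real.rpow_nonneg (by linarith [hz.1]) _) y)
  rw [integrable_prod_iff hFm.aestronglyMeasurable]
  refine ⟨?_, ?_⟩
  · filter_upwards [ae_restrict_mem measurableSet_Ioo] with x hx
    exact hsec x hx
  · set C := M * ((b - a) ^ (β + 1) / (β + 1)) with hC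
    refine Integrable.mono' (hvi.norm.const_mul C) ?_ ?_
    · exact hFm.norm.aestronglyMeasurable.integral_prod_right'
    · filter_upwards [ae_restrict_mem measurableSet_Ioo] with x hx
      have hnn : (0:ℝ) ≤ ∫ y, ‖if x < y then v x * (y - x) ^ β * w y else 0‖
          ∂(volume.restrict (Ioo a b)) := integral_nonneg fun y => norm_nonneg _
      rw [Real.norm_of_nonneg hnn]
      have hgi : Integrable (fun y => (|v x| * M) * (Ioo x b).indicator
          (fun y => (y - x) ^ β) y) (volume.restrict (Ioo a b)) :=
        (((rpow_ion hβ x b).integrable_indicator measurableSet_Ioo).restrict).const_mul _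
      have hle : ∫ y, ‖if x < y then v x * (y - x) ^ β * w y else 0‖
            ∂(volume.restrict (Ioo a b))
          ≤ ∫ y, (|v x| * M) * (Ioo x b).indicator (fun y => (y - x) ^ β) y
            ∂(volume.restrict (Ioo a b)) := by
        refine integral_mono_of_nonneg (Filter.Eventually.of_forall fun y => norm_nonneg _)
          hgi ?_
        filter_upwards [ae_restrict_mem measurableSet_Ioo] with y hy
        by_cases hxy : x < y
        · have hynn : (0:ℝ) ≤ (y - x) ^ β := Real.rpow_nonneg (by linarith) _
          simp only [hxy, if_true]
          rw [indicator_of_mem (mem_Ioo.mpr ⟨hxy, hy.2⟩), Real.norm_eq_abs, abs_mul, abs_mul,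
            abs_of_nonneg hynn]
          calc |v x| * (y - x) ^ β * |w y| ≤ |v x| * (y - x) ^ β * M :=
                mul_le_mul_of_nonneg_left (hMw y hy) (by positivity)
            _ = |v x| * M * (y - x) ^ β := by ring
        · simp only [hxy, if_false, norm_zero]
          exact mul_nonneg (by positivity)
            (indicator_nonneg (fun z hz => Real.rpow_nonneg (by linarith [hz.1]) _) y)
      refine hle.trans ?_
      rw [MeasureTheory.integral_const_mul, setIntegral_indicator measurableSet_Ioo]
      have hinter : Ioo a b ∩ Ioo x b = Ioo x b := by
        rw [inter_eq_right]
        exact fun y hy => ⟨lt_trans hx.1 hy.1, hy.2⟩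
      rw [hinter, rpow_val hβ (le_of_lt hx.2)]
      have hbx : (b - x) ^ (β + 1) ≤ (b - a) ^ (β + 1) :=
        Real.rpow_le_rpow (by linarith [hx.2]) (by linarith [hx.1]) hβ1.le
      have h1 : (b - x) ^ (β + 1) / (β + 1) ≤ (b - a) ^ (β + 1) / (β + 1) := by gcongr
      calc |v x| * M * ((b - x) ^ (β + 1) / (β + 1))
          ≤ |v x| * M * ((b - a) ^ (β + 1) / (β + 1)) :=
            mul_le_mul_of_nonneg_left h1 (by positivity)
        _ = C * ‖v x‖ := by rw [hC, Real.norm_eq_abs]; ring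

lemma ftc_Ioo {f : ℝ → ℝ} (hf : ContDiff ℝ 1 f) {a b : ℝ} (hab : a ≤ b) :
    ∫ x in Ioo a b, deriv f x = f b - f a := by
  rw [← MeasureTheory.integral_Ioc_eq_integral_Ioo, ← intervalIntegral.integral_of_le hab]
  exact intervalIntegral.integral_deriv_eq_sub
    (fun x _ => (hf.differentiable one_ne_zero).differentiableAt)
    ((hf.continuous_deriv le_rfl).intervalIntegrable a b)

lemma stepB {α T : ℝ} (hα : α ∈ Ioo (0:ℝ) 1) (hT : 0 < T)
    (η : ℝ → ℝ) (hη : ContDiff ℝ 1 η) (hηT : η T = 0)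
    {M : ℝ} (hM : 0 ≤ M) (hMη : ∀ y ∈ Icc 0 T, |deriv η y| ≤ M)
    {s : ℝ} (hs : s ∈ Ico 0 T) :
    ∫ t in Ioo s T, (t - s) ^ (-α) * rightInt α T (deriv η) t =
      Real.Gamma (1 - α) * (-η s) := by
  obtain ⟨hα0, hα1⟩ := hα
  have hΓα : 0 < Real.Gamma α := Real.Gamma_pos_of_pos hα0
  have hsT : s < T := hs.2
  have key : ∫ t in Ioo s T, (t - s) ^ (-α) * rightInt α T (deriv η) t
      = (1 / Real.Gamma α) * ∫ t in Ioo s T, ∫ r in Ioo s T,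
          (if t < r then (t - s) ^ (-α) * (r - t) ^ (α - 1) * deriv η r else 0) := by
    rw [← MeasureTheory.integral_const_mul]
    refine setIntegral_congr_fun measurableSet_Ioo fun t ht => ?_
    have h1 : ∫ r in Ioo s T, (if t < r then (t - s) ^ (-α) * (r - t) ^ (α - 1) * deriv η r else 0)
        = ∫ r in Ioo t T, (t - s) ^ (-α) * (r - t) ^ (α - 1) * deriv η r := by
      have e1 : (fun r => if t < r then (t - s) ^ (-α) * (r - t) ^ (α - 1) * deriv η r else 0)
          = (Ioi t).indicator (fun r => (t - s) ^ (-α) * (r - t) ^ (α - 1) * deriv η r) := by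
        funext r; simp [indicator_apply, mem_Ioi]
      have hset : Ioo s T ∩ Ioi t = Ioo t T := by
        ext r
        simp only [mem_inter_iff, mem_Ioo, mem_Ioi]
        constructor
        · rintro ⟨⟨a1, a2⟩, a3⟩; exact ⟨a3, a2⟩
        · rintro ⟨a1, a2⟩; exact ⟨⟨lt_trans ht.1 a1, a2⟩, a1⟩
      rw [e1, setIntegral_indicator measurableSet_Ioi, hset]
    have e2 : ∫ r in Ioo t T, (t - s) ^ (-α) * (r - t) ^ (α - 1) * deriv η r
        = (t - s) ^ (-α) * ∫ r in Ioo t T, (r - t) ^ (α - 1) * deriv η r := by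
      rw [← MeasureTheory.integral_const_mul]
      exact setIntegral_congr_fun measurableSet_Ioo fun r _ => by ring
    rw [h1, e2]
    unfold rightInt
    ring
  rw [key]
  have hswap : ∫ t in Ioo s T, ∫ r in Ioo s T,
        (if t < r then (t - s) ^ (-α) * (r - t) ^ (α - 1) * deriv η r else 0)
      = ∫ r in Ioo s T, ∫ t in Ioo s T,
        (if t < r then (t - s) ^ (-α) * (r - t) ^ (α - 1) * deriv η r else 0) := by
    refine MeasureTheory.integral_integral_swap ?_
    exact prod_int (β := α - 1) (a := s) (b := T) (M := M) (by linarith) hsT hM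
      (fun t => (t - s) ^ (-α)) (deriv η) (by fun_prop) (rpow_ion (by linarith) s T)
      (measurable_deriv η) (fun y hy => hMη y ⟨le_trans hs.1 hy.1.le, hy.2.le⟩)
  rw [hswap]
  have hinner : ∀ r ∈ Ioo s T, ∫ t in Ioo s T,
        (if t < r then (t - s) ^ (-α) * (r - t) ^ (α - 1) * deriv η r else 0)
      = (Real.Gamma (1 - α) * Real.Gamma α) * deriv η r := by
    intro r hr
    have h2 : (fun t : ℝ => if t < r then (t - s) ^ (-α) * (r - t) ^ (α - 1) * deriv η r else 0)
        = (Iio r).indicator (fun t => (t - s) ^ (-α) * (r - t) ^ (α - 1) * deriv η r) := by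
      funext t; simp [indicator_apply, mem_Iio]
    have h3 : Ioo s T ∩ Iio r = Ioo s r := by
      ext t
      simp only [mem_inter_iff, mem_Ioo, mem_Iio]
      constructor
      · rintro ⟨⟨a1, a2⟩, a3⟩; exact ⟨a1, a3⟩
      · rintro ⟨a1, a2⟩; exact ⟨⟨a1, lt_trans a2 hr.2⟩, a2⟩
    rw [h2, setIntegral_indicator measurableSet_Iio, h3,
      MeasureTheory.integral_mul_const, kernel_beta ⟨hα0, hα1⟩ hr.1]
  rw [setIntegral_congr_fun measurableSet_Ioo hinner]
  rw [MeasureTheory.integral_const_mul, ftc_Ioo hη hsT.le, hηT]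
  field_simp
  ring

lemma rightInt_meas (α T : ℝ) (η : ℝ → ℝ) : Measurable (rightInt α T (deriv η)) := by
  have hFm : Measurable (fun p : ℝ × ℝ =>
      if p.1 < p.2 ∧ p.2 < T then (p.2 - p.1) ^ (α - 1) * deriv η p.2 else 0) := by
    refine Measurable.ite ?_ ?_ measurable_const
    · exact MeasurableSet.inter (measurableSet_lt measurable_fst measurable_snd)
        (measurableSet_lt measurable_snd measurable_const)
    · have h1 : Measurable (fun p : ℝ × ℝ => (p.2 - p.1) ^ (α - 1)) := by fun_prop
      exact h1.mul ((measurable_deriv η).comp measurable_snd)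
  have hsm := hFm.stronglyMeasurable.integral_prod_right' (ν := volume)
  have heq : rightInt α T (deriv η) = fun t => (1 / Real.Gamma α) *
      ∫ s, (if t < s ∧ s < T then (s - t) ^ (α - 1) * deriv η s else 0) := by
    funext t
    unfold rightInt
    congr 1
    rw [← MeasureTheory.integral_indicator measurableSet_Ioo]
    congr 1
    funext s
    simp [indicator_apply, mem_Ioo]
  rw [heq]
  exact measurable_const.mul hsm.measurable

lemma rightInt_bound {α T M : ℝ} (hα : α ∈ Ioo (0:ℝ) 1) (hT : 0 < T) (hM : 0 ≤ M)
    (η : ℝ → ℝ) (hMη : ∀ y ∈ Icc 0 T, |deriv η y| ≤ M) {t : ℝ} (ht : t ∈ Ico 0 T) :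
    |rightInt α T (deriv η) t| ≤ (1 / Real.Gamma α) * (M * (T ^ α / α)) := by
  obtain ⟨hα0, hα1⟩ := hα
  have hΓα : 0 < Real.Gamma α := Real.Gamma_pos_of_pos hα0
  unfold rightInt
  rw [abs_mul, abs_of_nonneg (by positivity : (0:ℝ) ≤ 1 / Real.Gamma α)]
  refine mul_le_mul_of_nonneg_left ?_ (by positivity)
  have hgi : Integrable (fun s => M * (s - t) ^ (α - 1))
      (volume.restrict (Ioo t T)) :=
    ((rpow_ion (by linarith) t T).const_mul M)
  have h1 : |∫ s in Ioo t T, (s - t) ^ (α - 1) * deriv η s|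
      ≤ ∫ s in Ioo t T, M * (s - t) ^ (α - 1) := by
    rw [← Real.norm_eq_abs]
    refine norm_integral_le_of_norm_le hgi ?_
    filter_upwards [ae_restrict_mem measurableSet_Ioo] with s hs
    have hnn : (0:ℝ) ≤ (s - t) ^ (α - 1) := Real.rpow_nonneg (by linarith [hs.1]) _
    rw [Real.norm_eq_abs, abs_mul, abs_of_nonneg hnn]
    have : |deriv η s| ≤ M := hMη s ⟨by linarith [ht.1, hs.1], hs.2.le⟩
    calc (s - t) ^ (α - 1) * |deriv η s| ≤ (s - t) ^ (α - 1) * M :=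
          mul_le_mul_of_nonneg_left this hnn
      _ = M * (s - t) ^ (α - 1) := by ring
  refine h1.trans ?_
  rw [MeasureTheory.integral_const_mul, rpow_val (by linarith) ht.2.le,
    show α - 1 + 1 = α by ring]
  have h2 : (T - t) ^ α ≤ T ^ α :=
    Real.rpow_le_rpow (by linarith [ht.2]) (by linarith [ht.1]) hα0.le
  gcongr

end Statement8Aux

open Statement8Aux
/-- Lemma 7.1, first identity: fractional integration by parts. -/
theorem statement_8 (α T : ℝ) (hα : α ∈ Ioo (0:ℝ) 1) (hT : 0 < T)
    (u η : ℝ → ℝ) (hu : ContDiff ℝ 1 u) (hη : ContDiff ℝ 1 η)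
    (hu0 : u 0 = 0) (hηT : η T = 0) :
    ∫ t in Ioo (0:ℝ) T, deriv u t * η t =
      -∫ t in Ioo (0:ℝ) T, caputo1 α u t * rightInt α T (deriv η) t := by
  obtain ⟨hα0, hα1⟩ := hα
  have hΓ1 : 0 < Real.Gamma (1 - α) := Real.Gamma_pos_of_pos (by linarith)
  have hΓα : 0 < Real.Gamma α := Real.Gamma_pos_of_pos hα0
  -- bound for deriv η on Icc 0 T
  obtain ⟨M₀, hM₀⟩ := isCompact_Icc.exists_bound_of_continuousOn
    (f := deriv η) (s := Icc (0:ℝ) T) (hη.continuous_deriv le_rfl).continuousOn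
  set M : ℝ := max M₀ 0 with hMdef
  have hM : 0 ≤ M := le_max_right _ _
  have hMη : ∀ y ∈ Icc (0:ℝ) T, |deriv η y| ≤ M := fun y hy =>
    le_trans (by simpa using hM₀ y hy) (le_max_left _ _)
  -- φ and its properties
  set φ := rightInt α T (deriv η) with hφdef
  have hφm : Measurable φ := rightInt_meas α T η
  set C : ℝ := (1 / Real.Gamma α) * (M * (T ^ α / α)) with hCdef
  have hC : 0 ≤ C := by positivity
  have hφb : ∀ t ∈ Ioo (0:ℝ) T, |φ t| ≤ C := fun t ht =>
    rightInt_bound ⟨hα0, hα1⟩ hT hM η hMη ⟨ht.1.le, ht.2⟩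
  -- u' is integrable on (0,T)
  have hu'c : Continuous (deriv u) := hu.continuous_deriv le_rfl
  have hu'i : IntegrableOn (deriv u) (Ioo (0:ℝ) T) :=
    (hu'c.integrableOn_Icc).mono_set Ioo_subset_Icc_self
  -- Step 1: write the RHS integral as a double integral
  have key1 : ∫ t in Ioo (0:ℝ) T, caputo1 α u t * φ t
      = (1 / Real.Gamma (1 - α)) * ∫ t in Ioo (0:ℝ) T, ∫ s in Ioo (0:ℝ) T,
          (if s < t then deriv u s * (t - s) ^ (-α) * φ t else 0) := by
    rw [← MeasureTheory.integral_const_mul]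
    refine setIntegral_congr_fun measurableSet_Ioo fun t ht => ?_
    have e1 : (fun s => if s < t then deriv u s * (t - s) ^ (-α) * φ t else 0)
        = (Iio t).indicator (fun s => deriv u s * (t - s) ^ (-α) * φ t) := by
      funext s; simp [indicator_apply, mem_Iio]
    have hset : Ioo (0:ℝ) T ∩ Iio t = Ioo 0 t := by
      ext s
      simp only [mem_inter_iff, mem_Ioo, mem_Iio]
      constructor
      · rintro ⟨⟨a1, a2⟩, a3⟩; exact ⟨a1, a3⟩
      · rintro ⟨a1, a2⟩; exact ⟨⟨a1, lt_trans a2 ht.2⟩, a2⟩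
    have e2 : ∫ s in Ioo (0:ℝ) t, deriv u s * (t - s) ^ (-α) * φ t
        = (∫ s in Ioo (0:ℝ) t, (t - s) ^ (-α) * deriv u s) * φ t := by
      rw [← MeasureTheory.integral_mul_const]
      exact setIntegral_congr_fun measurableSet_Ioo fun s _ => by ring
    rw [e1, setIntegral_indicator measurableSet_Iio, hset, e2]
    unfold caputo1
    ring
  -- Step 2: swap
  have key2 : ∫ t in Ioo (0:ℝ) T, ∫ s in Ioo (0:ℝ) T,
        (if s < t then deriv u s * (t - s) ^ (-α) * φ t else 0)
      = ∫ s in Ioo (0:ℝ) T, ∫ t in Ioo (0:ℝ) T,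
        (if s < t then deriv u s * (t - s) ^ (-α) * φ t else 0) := by
    refine (MeasureTheory.integral_integral_swap ?_).symm
    exact prod_int (β := -α) (a := (0:ℝ)) (b := T) (M := C) (by linarith) hT hC
      (deriv u) φ (measurable_deriv u) hu'i hφm hφb
  -- Step 3: inner integral via stepB
  have key3 : ∀ s ∈ Ioo (0:ℝ) T, ∫ t in Ioo (0:ℝ) T,
        (if s < t then deriv u s * (t - s) ^ (-α) * φ t else 0)
      = deriv u s * (Real.Gamma (1 - α) * (-η s)) := by
    intro s hs
    have e1 : (fun t => if s < t then deriv u s * (t - s) ^ (-α) * φ t else 0)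
        = (Ioi s).indicator (fun t => deriv u s * (t - s) ^ (-α) * φ t) := by
      funext t; simp [indicator_apply, mem_Ioi]
    have hset : Ioo (0:ℝ) T ∩ Ioi s = Ioo s T := by
      ext t
      simp only [mem_inter_iff, mem_Ioo, mem_Ioi]
      constructor
      · rintro ⟨⟨a1, a2⟩, a3⟩; exact ⟨a3, a2⟩
      · rintro ⟨a1, a2⟩; exact ⟨⟨lt_trans hs.1 a1, a2⟩, a1⟩
    have e2 : ∫ t in Ioo s T, deriv u s * (t - s) ^ (-α) * φ t
        = deriv u s * ∫ t in Ioo s T, (t - s) ^ (-α) * φ t := by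
      rw [← MeasureTheory.integral_const_mul]
      exact setIntegral_congr_fun measurableSet_Ioo fun t _ => by ring
    rw [e1, setIntegral_indicator measurableSet_Ioi, hset, e2,
      stepB ⟨hα0, hα1⟩ hT η hη hηT hM hMη ⟨hs.1.le, hs.2⟩]
  -- Step 4: conclude
  have key4 : (1 / Real.Gamma (1 - α)) * ∫ s in Ioo (0:ℝ) T,
        deriv u s * (Real.Gamma (1 - α) * (-η s))
      = ∫ s in Ioo (0:ℝ) T, -(deriv u s * η s) := by
    rw [← MeasureTheory.integral_const_mul]
    refine setIntegral_congr_fun measurableSet_Ioo fun s _ => ?_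
    field_simp
  have : ∫ t in Ioo (0:ℝ) T, caputo1 α u t * φ t
      = - ∫ t in Ioo (0:ℝ) T, deriv u t * η t := by
    rw [key1, key2, setIntegral_congr_fun measurableSet_Ioo key3, key4,
      MeasureTheory.integral_neg]
  rw [this, neg_neg]
end

section
/- Let d ≥ 1 and δ ∈ (0,1), and let A = (a^{ij})_{1≤i,j≤d} be a real d×d matrix (not necessarily symmetric) satisfying a^{ij} ξ_i ξ_j ≥ δ|ξ|² for all ξ ∈ ℝ^d and |a^{ij}| ≤ δ^{−1} for all i,j. Define the matrix = (â^{ij}) by â^{11} = 1/a^{11}; â^{1j} = 0 for j = 2,…,d; â^{i1} = (a^{1i} + a^{i1})/a^{11} for i = 2,…,d; and â^{ij} = a^{ij} for i,j = 2,…,d. Then â^{ij} ξ_i ξ_j ≥ δ³ |ξ|² for all ξ ∈ ℝ^d. -/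
noncomputable section

/-- The transformed coefficient matrix `Â` arising from the change of variables
`y_1 = ∫_0^{x_1} dr / a^{11}(r)`: with `z` the first index,
`â^{11} = 1/a^{11}`, `â^{1j} = 0` for `j ≠ 1`, `â^{i1} = (a^{1i} + a^{i1})/a^{11}` for
`i ≠ 1`, and `â^{ij} = a^{ij}` otherwise. -/
def hatMat {d : ℕ} (a : Fin d → Fin d → ℝ) (z : Fin d) (i j : Fin d) : ℝ :=
  if i = z then (if j = z then 1 / a z z else 0)
  else (if j = z then (a z i + a i z) / a z z else a i j)

end

/-- ellipticity of the transformed coefficient matrix. -/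
theorem statement_17 (d : ℕ) (hd : 0 < d) (δ : ℝ) (hδ : δ ∈ Set.Ioo (0:ℝ) 1)
    (a : Fin d → Fin d → ℝ)
    (hell : ∀ ξ : Fin d → ℝ, δ * ∑ i, ξ i ^ 2 ≤ ∑ i, ∑ j, a i j * ξ i * ξ j)
    (hbd : ∀ i j, |a i j| ≤ δ⁻¹) :
    ∀ ξ : Fin d → ℝ,
      δ ^ 3 * ∑ i, ξ i ^ 2 ≤ ∑ i, ∑ j, hatMat a ⟨0, hd⟩ i j * ξ i * ξ j := by
  obtain ⟨hδ0, hδ1⟩ := hδ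
  set z : Fin d := ⟨0, hd⟩ with hz
  have haz : δ ≤ a z z := by
    have h := hell (fun i => if i = z then 1 else 0)
    simpa [apply_ite (· ^ (2:ℕ)), mul_ite, ite_mul, Finset.sum_ite_eq'] using h
  have hazpos : 0 < a z z := lt_of_lt_of_le hδ0 haz
  have haz0 : a z z ≠ 0 := ne_of_gt hazpos
  have hazu : a z z ≤ δ⁻¹ := le_of_abs_le (hbd z z)
  intro ξ
  set η : Fin d → ℝ := fun i => if i = z then ξ z / a z z else ξ i with hη
  have split : ∀ (f : Fin d → ℝ), ∑ i, f i = (∑ i ∈ Finset.univ.erase z, f i) + f z :=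
    fun f => (Finset.sum_erase_add _ _ (Finset.mem_univ z)).symm
  have key : ∑ i, ∑ j, hatMat a z i j * ξ i * ξ j = ∑ i, ∑ j, a i j * η i * η j := by
    rw [split (fun i => ∑ j, hatMat a z i j * ξ i * ξ j),
        split (fun i => ∑ j, a i j * η i * η j)]
    rw [split (fun j => hatMat a z z j * ξ z * ξ j),
        split (fun j => a z j * η z * η j)]
    have e1 : ∀ i ∈ Finset.univ.erase z,
        (∑ j, hatMat a z i j * ξ i * ξ j)
          = (∑ j ∈ Finset.univ.erase z, a i j * η i * η j) + (a i z * η i * η z + a z i * η z * η i) := by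
      intro i hi
      have hi' : i ≠ z := Finset.ne_of_mem_erase hi
      rw [split (fun j => hatMat a z i j * ξ i * ξ j)]
      have e2 : ∀ j ∈ Finset.univ.erase z, hatMat a z i j * ξ i * ξ j = a i j * η i * η j := by
        intro j hj
        have hj' : j ≠ z := Finset.ne_of_mem_erase hj
        simp [hatMat, hi', hj', hη]
      rw [Finset.sum_congr rfl e2]
      have : hatMat a z i z * ξ i * ξ z = a i z * η i * η z + a z i * η z * η i := by
        simp only [hatMat, if_neg hi', if_pos rfl, hη, if_pos rfl]
        simp only [eq_self_iff_true, if_true, ↓reduceIte]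
        field_simp
        ring
      rw [this]
    rw [Finset.sum_congr rfl e1, Finset.sum_add_distrib]
    have e3 : ∀ j ∈ Finset.univ.erase z, hatMat a z z j * ξ z * ξ j = 0 := by
      intro j hj
      simp [hatMat, Finset.ne_of_mem_erase hj]
    rw [Finset.sum_congr rfl e3, Finset.sum_const_zero]
    have e4 : hatMat a z z z * ξ z * ξ z = a z z * η z * η z := by
      simp only [hatMat, if_pos rfl, hη]
      simp only [eq_self_iff_true, if_true, ↓reduceIte]
      field_simp
    rw [e4]
    have e5 : ∑ i ∈ Finset.univ.erase z, (a i z * η i * η z + a z i * η z * η i)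
        = (∑ i ∈ Finset.univ.erase z, a i z * η i * η z)
          + ∑ i ∈ Finset.univ.erase z, a z i * η z * η i := Finset.sum_add_distrib
    rw [e5]
    have e6 : ∑ i ∈ Finset.univ.erase z, ∑ j, a i j * η i * η j
        = ∑ i ∈ Finset.univ.erase z,
            ((∑ j ∈ Finset.univ.erase z, a i j * η i * η j) + a i z * η i * η z) :=
      Finset.sum_congr rfl fun i _ => split _
    rw [e6, Finset.sum_add_distrib]
    ring
  rw [key]
  refine le_trans ?_ (hell η)
  have step : ∑ i, δ ^ 2 * ξ i ^ 2 ≤ ∑ i, η i ^ 2 := by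
    refine Finset.sum_le_sum fun i _ => ?_
    by_cases hi : i = z
    · subst hi
      simp only [hη, if_pos rfl, div_pow]
      rw [le_div_iff₀ (by positivity)]
      have h1 : δ * a z z ≤ 1 := by
        have := mul_le_mul_of_nonneg_left hazu hδ0.le
        rwa [mul_inv_cancel₀ (ne_of_gt hδ0)] at this
      have hsq : (δ * a z z) ^ 2 ≤ 1 := by nlinarith [mul_pos hδ0 hazpos]
      nlinarith [sq_nonneg (ξ z), mul_nonneg (sub_nonneg.mpr hsq) (sq_nonneg (ξ z))]
    · simp only [hη, if_neg hi]
      have h2 : δ ^ 2 ≤ 1 := by nlinarith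
      nlinarith [mul_nonneg (sub_nonneg.mpr h2) (sq_nonneg (ξ i))]
  calc δ ^ 3 * ∑ i, ξ i ^ 2 = δ * ∑ i, δ ^ 2 * ξ i ^ 2 := by
        rw [Finset.mul_sum, Finset.mul_sum]; exact Finset.sum_congr rfl fun i _ => by ring
    _ ≤ δ * ∑ i, η i ^ 2 := by exact mul_le_mul_of_nonneg_left step hδ0.le
end
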